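/- The pivot stays in the anchor cone: if u and v are linearly independent and w_f > 0 and w_r > 0, then for every γ ∈ [0,1] there exist c₁, c₂ ≥ 0 such that g_γ = c₁·g_fid + c₂·g_eff. -/

import Mathlib

open Real InnerProductSpace

set_option maxHeartbeats 1000000 in
/-- The pivot stays in the anchor cone: for `γ ∈ [0,1]` there are nonnegative `c₁, c₂`
with `g_γ = c₁ • g_fid + c₂ • g_eff`. -/
theorem stmt_12 {E : Type*} [NormedAddCommGroup E] [InnerProductSpace ℝ E]
    (u v : E) (hu : u ≠ 0) (hv : v ≠ 0)
    (hind : LinearIndependent ℝ ![u, v])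
    (wf wr : ℝ) (hwf : 0 < wf) (hwr : 0 < wr)
    (t : E) (ht : t = wf • u + wr • v)
    (geff : E) (hgeff : geff = t - (⟪t, v⟫_ℝ / ‖v‖ ^ 2) • v)
    (gfid : E) (hgfid : gfid = t - (⟪t, u⟫_ℝ / ‖u‖ ^ 2) • u)
    (φ : ℝ) (hφ : φ = Real.arccos (⟪gfid, geff⟫_ℝ / (‖gfid‖ * ‖geff‖)))
    (γ : ℝ) (hγ : γ ∈ Set.Icc (0 : ℝ) 1) :
    ∃ c₁ c₂ : ℝ, 0 ≤ c₁ ∧ 0 ≤ c₂ ∧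
      Real.cos (γ * φ) • (‖gfid‖⁻¹ • gfid) + Real.sin (γ * φ) • (‖u‖⁻¹ • u)
        = c₁ • gfid + c₂ • geff := by
  have hnu : (0:ℝ) < ‖u‖ := norm_pos_iff.mpr hu
  have hnv : (0:ℝ) < ‖v‖ := norm_pos_iff.mpr hv
  obtain ⟨hγ0, hγ1⟩ := hγ
  set k : ℝ := ⟪u, v⟫_ℝ with hk
  have hpair : ∀ s t : ℝ, s • u + t • v = 0 → s = 0 ∧ t = 0 :=
    LinearIndependent.pair_iff.mp hind
  -- strict Cauchy-Schwarz
  have hCS : k ^ 2 < ‖u‖ ^ 2 * ‖v‖ ^ 2 := by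
    have hw : v - (k / ‖u‖ ^ 2) • u ≠ 0 := by
      intro h
      have := hpair (-(k / ‖u‖ ^ 2)) 1 (by rw [← h]; module)
      exact one_ne_zero this.2
    have h2 : 0 < ‖v - (k / ‖u‖ ^ 2) • u‖ ^ 2 :=
      pow_pos (norm_pos_iff.mpr hw) 2
    have h3 : ‖v - (k / ‖u‖ ^ 2) • u‖ ^ 2 = ‖v‖ ^ 2 - k ^ 2 / ‖u‖ ^ 2 := by
      rw [norm_sub_sq_real, real_inner_smul_right, norm_smul, mul_pow,
        Real.norm_eq_abs, sq_abs, real_inner_comm u v, ← hk]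
      field_simp
      ring
    rw [h3] at h2
    have h4 : k ^ 2 / ‖u‖ ^ 2 < ‖v‖ ^ 2 := by linarith
    calc k ^ 2 = (k ^ 2 / ‖u‖ ^ 2) * ‖u‖ ^ 2 := by field_simp
    _ < ‖v‖ ^ 2 * ‖u‖ ^ 2 := mul_lt_mul_of_pos_right h4 (by positivity)
    _ = ‖u‖ ^ 2 * ‖v‖ ^ 2 := by ring
  have hgfid2 : gfid = wr • v - (wr * k / ‖u‖ ^ 2) • u := by
    rw [hgfid, ht]
    simp only [inner_add_left, real_inner_smul_left, real_inner_self_eq_norm_sq,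
      real_inner_comm u v, ← hk]
    match_scalars <;> field_simp <;> ring
  set a : ℝ := wf * (1 - k ^ 2 / (‖u‖ ^ 2 * ‖v‖ ^ 2)) with ha_def
  set b : ℝ := -(wf * k / (wr * ‖v‖ ^ 2)) with hb_def
  have hab : geff = a • u + b • gfid := by
    rw [hgeff, ht, hgfid2]
    simp only [inner_add_left, real_inner_smul_left, real_inner_self_eq_norm_sq,
      real_inner_comm u v, ← hk]
    match_scalars <;> simp only [ha_def, hb_def] <;> field_simp <;> ring
  have ha : 0 < a := by
    have h1 : k ^ 2 / (‖u‖ ^ 2 * ‖v‖ ^ 2) < 1 := (div_lt_one (by positivity)).mpr hCS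
    rw [ha_def]
    exact mul_pos hwf (by linarith)
  have hau : ⟪gfid, u⟫_ℝ = 0 := by
    rw [hgfid2]
    simp only [inner_sub_left, real_inner_smul_left, real_inner_self_eq_norm_sq,
      real_inner_comm u v, ← hk]
    field_simp
    ring
  have hgfid_ne : gfid ≠ 0 := by
    intro h
    rw [hgfid2] at h
    have := hpair (-(wr * k / ‖u‖ ^ 2)) wr (by rw [← h]; module)
    exact hwr.ne' this.2
  have hgeff_inner_u : ⟪geff, u⟫_ℝ = a * ‖u‖ ^ 2 := by
    rw [hab]
    simp only [inner_add_left, real_inner_smul_left, real_inner_self_eq_norm_sq, hau]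
    ring
  have hgeff_ne : geff ≠ 0 := by
    intro h
    rw [h] at hgeff_inner_u
    simp only [inner_zero_left] at hgeff_inner_u
    nlinarith
  have hnf : (0:ℝ) < ‖gfid‖ := norm_pos_iff.mpr hgfid_ne
  have hne : (0:ℝ) < ‖geff‖ := norm_pos_iff.mpr hgeff_ne
  have hnorm_geff : ‖geff‖ ^ 2 = a ^ 2 * ‖u‖ ^ 2 + b ^ 2 * ‖gfid‖ ^ 2 := by
    have h0 : ‖geff‖ ^ 2 = ⟪geff, geff⟫_ℝ := (real_inner_self_eq_norm_sq geff).symm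
    rw [h0]
    nth_rewrite 1 [hab]
    nth_rewrite 1 [hab]
    simp only [inner_add_left, inner_add_right, real_inner_smul_left, real_inner_smul_right]
    simp only [real_inner_comm gfid u, hau, real_inner_self_eq_norm_sq]
    ring
  set s : ℝ := a * ‖u‖ / ‖geff‖ with hs_def
  set c : ℝ := b * ‖gfid‖ / ‖geff‖ with hc_def
  have hs : 0 < s := by rw [hs_def]; positivity
  have hc2s2 : c ^ 2 + s ^ 2 = 1 := by
    rw [hs_def, hc_def]
    field_simp
    linarith [hnorm_geff]
  have hfg : ⟪gfid, geff⟫_ℝ = b * ‖gfid‖ ^ 2 := by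
    rw [hab]
    simp only [inner_add_right, real_inner_smul_right, real_inner_self_eq_norm_sq, hau]
    ring
  have hquot : ⟪gfid, geff⟫_ℝ / (‖gfid‖ * ‖geff‖) = c := by
    rw [hfg, hc_def]
    field_simp
  have hcle : c ≤ 1 := by nlinarith [sq_nonneg (c - 1), sq_nonneg s]
  have hcge : -1 ≤ c := by nlinarith [sq_nonneg (c + 1), sq_nonneg s]
  have hcos : Real.cos φ = c := by rw [hφ, hquot, Real.cos_arccos hcge hcle]
  have hsin : Real.sin φ = s := by
    rw [hφ, hquot, Real.sin_arccos]
    have h1 : 1 - c ^ 2 = s ^ 2 := by linarith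
    rw [h1, Real.sqrt_sq hs.le]
  have hφ0 : 0 ≤ φ := hφ ▸ Real.arccos_nonneg _
  have hφπ : φ ≤ π := hφ ▸ Real.arccos_le_pi _
  have hsin1 : 0 ≤ Real.sin (γ * φ) :=
    Real.sin_nonneg_of_nonneg_of_le_pi (by positivity) (by nlinarith)
  have hsin2 : 0 ≤ Real.sin (φ - γ * φ) :=
    Real.sin_nonneg_of_nonneg_of_le_pi (by nlinarith) (by nlinarith)
  have hkey : Real.sin (φ - γ * φ) = s * Real.cos (γ * φ) - c * Real.sin (γ * φ) := by
    rw [Real.sin_sub, hsin, hcos]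
  have hsgeff : s * ‖geff‖ = a * ‖u‖ := by rw [hs_def]; field_simp
  have hcgeff : c * ‖geff‖ = b * ‖gfid‖ := by rw [hc_def]; field_simp
  clear_value k a b s c
  refine ⟨Real.sin (φ - γ * φ) / (s * ‖gfid‖), Real.sin (γ * φ) / (s * ‖geff‖),
    div_nonneg hsin2 (by positivity), div_nonneg hsin1 (by positivity), ?_⟩
  have hmain : (Real.sin (γ * φ) / (s * ‖geff‖)) • geff
      = (Real.sin (γ * φ) / (s * ‖geff‖)) • (a • u + b • gfid) := by rw [← hab]
  rw [hmain]
  match_scalars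
  · -- coefficient of gfid
    rw [hkey]
    have hb' : b = c * ‖geff‖ / ‖gfid‖ := by field_simp [hcgeff]; linarith [hcgeff]
    rw [hb']
    field_simp
    ring
  · -- coefficient of u
    have ha' : a = s * ‖geff‖ / ‖u‖ := by field_simp [hsgeff]; linarith [hsgeff]
    rw [ha']
    field_simp
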